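/- Consider the linear regression model y_i = x_i·θ* + ε_i with θ* = 0, where x_i ∈ {−1,1}, the noises ε_1,...,ε_n are i.i.d., independent of the x_i, with zero mean, symmetric about 0, and satisfying P(ε_i > t) > C(t+1)^{−α} for all t > 0 and some constants C > 0, α > 0. Let θ_n^LS := proj_{[−1,1]}((Σ_{i=1}^n x_i y_i)/(Σ_{i=1}^n x_i²)) = proj_{[−1,1]}((1/n)Σ_{i=1}^n x_i ε_i) be the projected least-squares estimator. Then for every δ ∈ (0,1) and n > 1, the excess risk satisfies P((θ_n^LS)² > δ) > C·(n√δ + 1)^{−α}. -/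

import Mathlib

set_option autoImplicit false

open MeasureTheory ProbabilityTheory Real
open scoped ENNReal

set_option maxHeartbeats 1000000

/-- clamp squared vs square -/
lemma aux_clamp_sq {δ u : ℝ} (h1 : δ < 1) :
    δ < (max (-1) (min 1 u)) ^ 2 ↔ δ < u ^ 2 := by
  rcases le_total u (-1) with h | h
  · rw [min_eq_right (h.trans (by norm_num)), max_eq_left h]
    constructor <;> intro _ <;> nlinarith
  · rcases le_total 1 u with h2 | h2
    · rw [min_eq_left h2, max_eq_right (by norm_num)]
      constructor <;> intro _ <;> nlinarith
    · rw [min_eq_right h2, max_eq_right h]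

/-- tail of sum of iid symmetric lower-bounded by one coordinate tail -/
lemma aux_pi_tail (ν : Measure ℝ) [IsProbabilityMeasure ν]
    (hsymm : Measure.map (fun e => -e) ν = ν) (k : ℕ) {t : ℝ} (ht : 0 < t) :
    ν (Set.Ioi t) ≤
      Measure.pi (fun _ : Fin (k + 1) => ν) {f | t < |∑ i, f i|} := by
  set πk := Measure.pi (fun _ : Fin k => ν) with hπk
  have hmp := measurePreserving_piFinSuccAbove (fun _ : Fin (k + 1) => ν) 0
  set e₀ := MeasurableEquiv.piFinSuccAbove (fun _ : Fin (k + 1) => ℝ) 0 with he₀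
  have hGm : MeasurableSet {g : Fin k → ℝ | 0 ≤ ∑ j, g j} :=
    measurableSet_le measurable_const (Finset.measurable_sum _ fun i _ => measurable_pi_apply i)
  have hGm' : MeasurableSet {g : Fin k → ℝ | (∑ j, g j) ≤ 0} :=
    measurableSet_le (Finset.measurable_sum _ fun i _ => measurable_pi_apply i) measurable_const
  set D₁ : Set (Fin (k + 1) → ℝ) := e₀ ⁻¹' (Set.Ioi t ×ˢ {g | 0 ≤ ∑ j, g j}) with hD₁
  set D₂ : Set (Fin (k + 1) → ℝ) := e₀ ⁻¹' (Set.Iio (-t) ×ˢ {g | (∑ j, g j) ≤ 0}) with hD₂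
  have hμD₁ : Measure.pi (fun _ : Fin (k + 1) => ν) D₁ = ν (Set.Ioi t) * πk {g | 0 ≤ ∑ j, g j} := by
    rw [hD₁, ← Measure.map_apply e₀.measurable ((measurableSet_Ioi).prod hGm), hmp.map_eq,
      Measure.prod_prod]
  have hμD₂ : Measure.pi (fun _ : Fin (k + 1) => ν) D₂ = ν (Set.Ioi t) * πk {g | (∑ j, g j) ≤ 0} := by
    rw [hD₂, ← Measure.map_apply e₀.measurable ((measurableSet_Iio).prod hGm'), hmp.map_eq,
      Measure.prod_prod]
    congr 1
    have hpre : (fun e : ℝ => -e) ⁻¹' (Set.Iio (-t)) = Set.Ioi t := by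
      ext a; simp [neg_lt_neg_iff]
    rw [← hsymm, Measure.map_apply measurable_neg measurableSet_Iio, hpre, hsymm]
  have he₀app : ∀ f : Fin (k + 1) → ℝ, e₀ f = (f 0, fun j => f j.succ) := by
    intro f
    ext j
    · rfl
    · rfl
  have hsub : D₁ ∪ D₂ ⊆ {f | t < |∑ i, f i|} := by
    rintro f (hf | hf)
    · rw [hD₁, Set.mem_preimage, he₀app] at hf
      obtain ⟨h1, h2⟩ := hf
      have : t < ∑ i, f i := by
        rw [Fin.sum_univ_succ]
        simp only [Set.mem_Ioi] at h1
        simp only [Set.mem_setOf_eq] at h2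
        linarith
      exact lt_of_lt_of_le this (le_abs_self _)
    · rw [hD₂, Set.mem_preimage, he₀app] at hf
      obtain ⟨h1, h2⟩ := hf
      have : ∑ i, f i < -t := by
        rw [Fin.sum_univ_succ]
        simp only [Set.mem_Iio] at h1
        simp only [Set.mem_setOf_eq] at h2
        linarith
      have : t < -∑ i, f i := by linarith
      exact lt_of_lt_of_le this (neg_le_abs _)
  have hdisj : Disjoint D₁ D₂ := by
    rw [Set.disjoint_left]
    intro f h1 h2
    rw [hD₁, Set.mem_preimage, he₀app] at h1
    rw [hD₂, Set.mem_preimage, he₀app] at h2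
    have := h1.1; have := h2.1
    simp only [Set.mem_Ioi] at *
    simp only [Set.mem_Iio] at *
    linarith [h1.1, h2.1]
  have hD₁m : MeasurableSet D₁ := e₀.measurable ((measurableSet_Ioi).prod hGm)
  have hD₂m : MeasurableSet D₂ := e₀.measurable ((measurableSet_Iio).prod hGm')
  have hone : (1 : ℝ≥0∞) ≤ πk {g | 0 ≤ ∑ j, g j} + πk {g | (∑ j, g j) ≤ 0} := by
    have : (Set.univ : Set (Fin k → ℝ)) ⊆ {g | 0 ≤ ∑ j, g j} ∪ {g | (∑ j, g j) ≤ 0} := by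
      intro g _
      rcases le_total 0 (∑ j, g j) with h | h
      · exact Or.inl h
      · exact Or.inr h
    calc (1 : ℝ≥0∞) = πk Set.univ := by simp [hπk]
      _ ≤ πk ({g | 0 ≤ ∑ j, g j} ∪ {g | (∑ j, g j) ≤ 0}) := measure_mono this
      _ ≤ _ := measure_union_le _ _
  calc ν (Set.Ioi t) = ν (Set.Ioi t) * 1 := (mul_one _).symm
    _ ≤ ν (Set.Ioi t) * (πk {g | 0 ≤ ∑ j, g j} + πk {g | (∑ j, g j) ≤ 0}) :=
        mul_le_mul_right hone _
    _ = Measure.pi (fun _ : Fin (k + 1) => ν) D₁ + Measure.pi (fun _ : Fin (k + 1) => ν) D₂ := by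
        rw [hμD₁, hμD₂, mul_add]
    _ = Measure.pi (fun _ : Fin (k + 1) => ν) (D₁ ∪ D₂) := (measure_union hdisj hD₂m).symm
    _ ≤ _ := measure_mono hsub
open scoped ENNReal

/-- **Polynomial excess-risk tail of projected least squares (Theorem 4, first part).**
In the model `yᵢ = xᵢθ* + εᵢ` with `θ* = 0`, `xᵢ ∈ {−1,1}`, i.i.d. noises `εᵢ` independent
of the `xᵢ`, zero mean, symmetric, and `P(εᵢ > t) > C(t+1)^{−α}` for all `t > 0`, the
projected least-squares estimator `θ_n^LS = proj_{[−1,1]}((Σxᵢyᵢ)/(Σxᵢ²))` satisfies, for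
every `δ ∈ (0,1)` and `n > 1`, `P((θ_n^LS)² > δ) > C(n√δ + 1)^{−α}`. -/
theorem projected_least_squares_polynomial_tail
    {Ω : Type*} [MeasurableSpace Ω] (μ : Measure Ω) [IsProbabilityMeasure μ]
    (x ε y : ℕ → Ω → ℝ)
    (hxm : ∀ i, Measurable (x i)) (hεm : ∀ i, Measurable (ε i))
    (hxpm : ∀ i ω, x i ω = 1 ∨ x i ω = -1)
    (ν : Measure ℝ) [IsProbabilityMeasure ν]
    (hiid : iIndepFun ε μ)
    (hlaw : ∀ i, Measure.map (ε i) μ = ν)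
    (hint : Integrable (fun e => e) ν)
    (hmean : ∫ e, e ∂ν = 0)
    (hsymm : Measure.map (fun e => -e) ν = ν)
    (hindep : IndepFun (fun ω (i : ℕ) => x i ω) (fun ω (i : ℕ) => ε i ω) μ)
    (C α : ℝ) (hC : 0 < C) (hα : 0 < α)
    (htail : ∀ t : ℝ, 0 < t → (ν (Set.Ioi t)).toReal > C * (t + 1) ^ (-α))
    -- the model: `yᵢ = xᵢ·θ* + εᵢ` with true coefficient `θ* = 0`
    (hy : ∀ i ω, y i ω = x i ω * 0 + ε i ω)
    (n : ℕ) (hn : 1 < n)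
    -- the least-squares estimator projected onto `[−1,1]`
    (θLS : Ω → ℝ)
    (hθLS : ∀ ω, θLS ω = max (-1) (min 1
      ((∑ i ∈ Finset.range n, x i ω * y i ω) / (∑ i ∈ Finset.range n, (x i ω) ^ 2))))
    (δ : ℝ) (hδ : δ ∈ Set.Ioo (0 : ℝ) 1) :
    (μ {ω | (θLS ω) ^ 2 > δ}).toReal > C * ((n : ℝ) * Real.sqrt δ + 1) ^ (-α) := by
  obtain ⟨hδ0, hδ1⟩ := hδ
  have hn0 : (0 : ℝ) < n := by exact_mod_cast Nat.zero_lt_of_lt hn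
  set t : ℝ := (n : ℝ) * Real.sqrt δ with hts
  have hsq0 : 0 < Real.sqrt δ := Real.sqrt_pos.2 hδ0
  have ht : 0 < t := mul_pos hn0 hsq0
  -- the sum S
  set S : Ω → ℝ := fun ω => ∑ i : Fin n, x (i : ℕ) ω * ε (i : ℕ) ω with hSdef
  -- event identification
  have hevent : {ω | (θLS ω) ^ 2 > δ} = {ω | t < |S ω|} := by
    ext ω
    simp only [Set.mem_setOf_eq, gt_iff_lt]
    have hden : (∑ i ∈ Finset.range n, (x i ω) ^ 2) = (n : ℝ) := by
      rw [Finset.sum_congr rfl (fun i _ => show (x i ω) ^ 2 = 1 by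
        rcases hxpm i ω with h | h <;> rw [h] <;> norm_num)]
      simp
    have hnum : (∑ i ∈ Finset.range n, x i ω * y i ω)
        = ∑ i ∈ Finset.range n, x i ω * ε i ω := by
      refine Finset.sum_congr rfl fun i _ => ?_
      rw [hy i ω]; ring
    have hSω : S ω = ∑ i ∈ Finset.range n, x i ω * ε i ω :=
      Fin.sum_univ_eq_sum_range (fun i => x i ω * ε i ω) n
    rw [hθLS ω, hden, hnum, aux_clamp_sq hδ1, ← hSω]
    have habs : |S ω / (n : ℝ)| = |S ω| / (n : ℝ) := by
      rw [abs_div, abs_of_pos hn0]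
    constructor
    · intro h
      have h1 : Real.sqrt δ < |S ω / (n : ℝ)| := by
        have := Real.sqrt_lt_sqrt hδ0.le h
        rwa [Real.sqrt_sq_eq_abs] at this
      rw [habs, lt_div_iff₀ hn0] at h1
      rw [hts]; linarith [h1]
    · intro h
      have h1 : Real.sqrt δ < |S ω| / (n : ℝ) := by
        rw [lt_div_iff₀ hn0]; rw [hts] at h; linarith
      rw [← habs] at h1
      have := mul_self_lt_mul_self (Real.sqrt_nonneg δ) h1
      calc δ = Real.sqrt δ * Real.sqrt δ := (Real.mul_self_sqrt hδ0.le).symm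
        _ < |S ω / (n : ℝ)| * |S ω / (n : ℝ)| := this
        _ = (S ω / (n : ℝ)) ^ 2 := by rw [← abs_mul, abs_mul_self, sq]
  -- vectors of the first n coordinates
  set X : Ω → (Fin n → ℝ) := fun ω i => x (i : ℕ) ω with hXdef
  set E : Ω → (Fin n → ℝ) := fun ω i => ε (i : ℕ) ω with hEdef
  have hXm : Measurable X := measurable_pi_lambda _ fun i => hxm i
  have hEm : Measurable E := measurable_pi_lambda _ fun i => hεm i
  set πν : Measure (Fin n → ℝ) := Measure.pi (fun _ => ν) with hπν
  -- law of E is the product measure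
  have hlawE : Measure.map E μ = πν := by
    refine (Measure.pi_eq fun B hB => ?_).symm
    rw [Measure.map_apply hEm (MeasurableSet.univ_pi hB)]
    set B' : ℕ → Set ℝ := fun i => if h : i < n then B ⟨i, h⟩ else Set.univ with hB'
    have hBm' : ∀ i : ℕ, MeasurableSet (B' i) := by
      intro i
      by_cases h : i < n
      · simp only [hB', dif_pos h]; exact hB _
      · simp only [hB', dif_neg h]; exact MeasurableSet.univ
    have hpre : E ⁻¹' Set.pi Set.univ B = ⋂ i ∈ Finset.range n, ε i ⁻¹' B' i := by
      ext ω
      simp only [Set.mem_preimage, Set.mem_pi, Set.mem_univ, forall_true_left,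
        Set.mem_iInter, Finset.mem_range, hB']
      constructor
      · intro h i hi
        simp only [dif_pos hi]
        exact h ⟨i, hi⟩
      · intro h i
        have := h i i.isLt
        simp only [dif_pos i.isLt] at this
        exact this
    rw [hpre, hiid.measure_inter_preimage_eq_mul (Finset.range n) (fun i _ => hBm' i)]
    have hfac : ∀ i ∈ Finset.range n, μ (ε i ⁻¹' B' i) = ν (B' i) := by
      intro i _
      rw [← hlaw i, Measure.map_apply (hεm i) (hBm' i)]
    rw [Finset.prod_congr rfl hfac]
    rw [← Fin.prod_univ_eq_prod_range (fun i => ν (B' i)) n]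
    refine Finset.prod_congr rfl fun i _ => ?_
    simp only [hB', dif_pos i.isLt, Fin.eta]
  -- independence of X and E
  have hXE : IndepFun X E μ := by
    have hr : Measurable fun (f : ℕ → ℝ) (i : Fin n) => f (i : ℕ) :=
      measurable_pi_lambda _ fun i => measurable_pi_apply _
    exact hindep.comp hr hr
  have hprod : Measure.map (fun ω => (X ω, E ω)) μ = (Measure.map X μ).prod πν := by
    rw [← hlawE]
    exact (indepFun_iff_map_prod_eq_prod_map_map hXm.aemeasurable hEm.aemeasurable).1 hXE
  -- the measurable target set
  set T : (Fin n → ℝ) × (Fin n → ℝ) → ℝ := fun p => ∑ i, p.1 i * p.2 i with hTdef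
  have hTm : Measurable T :=
    Finset.measurable_sum _ fun i _ =>
      ((measurable_pi_apply i).comp measurable_fst).mul
        ((measurable_pi_apply i).comp measurable_snd)
  have hsetm : MeasurableSet {p : (Fin n → ℝ) × (Fin n → ℝ) | t < |T p|} :=
    measurableSet_lt measurable_const hTm.abs
  -- rewrite the probability via the product measure
  have hμeq : μ {ω | t < |S ω|}
      = ((Measure.map X μ).prod πν) {p | t < |T p|} := by
    have h1 : {ω | t < |S ω|} = (fun ω => (X ω, E ω)) ⁻¹' {p | t < |T p|} := rfl
    rw [h1, ← Measure.map_apply (hXm.prodMk hEm) hsetm, hprod]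
  -- obtain n = k + 1
  obtain ⟨k, hk⟩ : ∃ k, n = k + 1 := ⟨n - 1, by omega⟩
  -- core lower bound: for sign vectors s, the slice measure is at least ν (Ioi t)
  have hslice : ∀ s : Fin n → ℝ, (∀ i, s i = 1 ∨ s i = -1) →
      ν (Set.Ioi t) ≤ πν {e | t < |T (s, e)|} := by
    intro s hs
    have hΦm : Measurable fun (e : Fin n → ℝ) (i : Fin n) => s i * e i :=
      measurable_pi_lambda _ fun i => by fun_prop
    have hΦ : Measure.map (fun (e : Fin n → ℝ) (i : Fin n) => s i * e i) πν = πν := by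
      refine (Measure.pi_eq fun B hB => ?_).symm
      rw [Measure.map_apply hΦm (MeasurableSet.univ_pi hB)]
      have hpre : (fun (e : Fin n → ℝ) (i : Fin n) => s i * e i) ⁻¹' Set.pi Set.univ B
          = Set.pi Set.univ (fun i => (fun a => s i * a) ⁻¹' B i) := by
        ext e; simp [Set.mem_pi]
      rw [hpre, hπν, Measure.pi_pi]
      refine Finset.prod_congr rfl fun i _ => ?_
      rcases hs i with h | h
      · rw [h]; simp
      · rw [h]
        have : (fun a : ℝ => (-1 : ℝ) * a) ⁻¹' B i = (fun a : ℝ => -a) ⁻¹' B i := by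
          ext a; simp
        rw [this, ← Measure.map_apply measurable_neg (hB i), hsymm]
    have htargm : MeasurableSet {f : Fin n → ℝ | t < |∑ i, f i|} :=
      measurableSet_lt measurable_const
        (Finset.measurable_sum _ fun i _ => measurable_pi_apply i).abs
    have hkey : πν {e | t < |T (s, e)|} = πν {f | t < |∑ i, f i|} := by
      have h2 : {e : Fin n → ℝ | t < |T (s, e)|}
          = (fun (e : Fin n → ℝ) (i : Fin n) => s i * e i) ⁻¹' {f | t < |∑ i, f i|} := rfl
      rw [h2, ← Measure.map_apply hΦm htargm, hΦ]
    rw [hkey]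
    subst hk
    exact aux_pi_tail ν hsymm k ht
  -- the set of sign vectors has full measure under the law of X
  set A : Set (Fin n → ℝ) := Set.pi Set.univ (fun _ => ({1, -1} : Set ℝ)) with hA
  have hAm : MeasurableSet A :=
    MeasurableSet.univ_pi fun _ => (measurableSet_singleton 1).union (measurableSet_singleton (-1))
  have hAfull : (Measure.map X μ) A = 1 := by
    rw [Measure.map_apply hXm hAm]
    have : X ⁻¹' A = Set.univ := by
      ext ω
      simp only [Set.mem_preimage, hA, Set.mem_pi, Set.mem_univ, forall_true_left, iff_true]
      intro i
      rcases hxpm (i : ℕ) ω with h | h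
      · exact Or.inl h
      · exact Or.inr h
    rw [this]
    exact measure_univ
  -- put it together
  have hmain : ν (Set.Ioi t) ≤ μ {ω | t < |S ω|} := by
    rw [hμeq, Measure.prod_apply hsetm]
    have hge : ∀ s, A.indicator (fun _ => ν (Set.Ioi t)) s
        ≤ πν (Prod.mk s ⁻¹' {p | t < |T p|}) := by
      intro s
      by_cases hsA : s ∈ A
      · rw [Set.indicator_of_mem hsA]
        have hs : ∀ i, s i = 1 ∨ s i = -1 := by
          intro i
          have := hsA i (Set.mem_univ i)
          simpa using this
        exact hslice s hs
      · rw [Set.indicator_of_notMem hsA]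
        exact zero_le
    calc ν (Set.Ioi t) = ν (Set.Ioi t) * (Measure.map X μ) A := by rw [hAfull, mul_one]
      _ = ∫⁻ s, A.indicator (fun _ => ν (Set.Ioi t)) s ∂(Measure.map X μ) := by
          rw [lintegral_indicator_const hAm]
      _ ≤ ∫⁻ s, πν (Prod.mk s ⁻¹' {p | t < |T p|}) ∂(Measure.map X μ) := lintegral_mono hge
  -- conclude
  rw [hevent]
  have hfin : μ {ω | t < |S ω|} ≠ ⊤ := measure_ne_top _ _
  have hto : (ν (Set.Ioi t)).toReal ≤ (μ {ω | t < |S ω|}).toReal :=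
    ENNReal.toReal_mono hfin hmain
  exact lt_of_lt_of_le (htail t ht) hto
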